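/- Let α, β, γ, δ, a be real numbers with sin(α/2) ≠ 0 and sin(β/2) ≠ 0, and suppose sin(α/2)·sin(δ − β/2) = sin(β/2)·sin(γ − α/2), (1 − cos α)·sin δ·cos a = sin α·cos δ + sin γ, and (1 − cos β)·sin γ·cos a = sin β·cos γ + sin δ. Then (sin β·sin γ − sin α·sin δ)·cos a = cos β·cos γ − cos α·cos δ. -/
import Mathlib


open Real

/-- Identity (19) in the proof of Lemma 3.12: Coolsaet's three equalities imply
`(sin β sin γ - sin α sin δ) cos a = cos β cos γ - cos α cos δ`. -/
theorem stmt_9 (α β γ δ a : ℝ)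
    (hα : Real.sin (α / 2) ≠ 0) (hβ : Real.sin (β / 2) ≠ 0)
    (h1 : Real.sin (α / 2) * Real.sin (δ - β / 2) =
      Real.sin (β / 2) * Real.sin (γ - α / 2))
    (h2 : (1 - Real.cos α) * Real.sin δ * Real.cos a = Real.sin α * Real.cos δ + Real.sin γ)
    (h3 : (1 - Real.cos β) * Real.sin γ * Real.cos a = Real.sin β * Real.cos γ + Real.sin δ) :
    (Real.sin β * Real.sin γ - Real.sin α * Real.sin δ) * Real.cos a =
      Real.cos β * Real.cos γ - Real.cos α * Real.cos δ := by
  have sA : Real.sin α = 2 * Real.sin (α/2) * Real.cos (α/2) := by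
    rw [show α = 2 * (α/2) by ring, Real.sin_two_mul]; ring
  have cA : Real.cos α = 2 * Real.cos (α/2)^2 - 1 := by
    rw [show α = 2 * (α/2) by ring, Real.cos_two_mul]; ring_nf
  have sB : Real.sin β = 2 * Real.sin (β/2) * Real.cos (β/2) := by
    rw [show β = 2 * (β/2) by ring, Real.sin_two_mul]; ring
  have cB : Real.cos β = 2 * Real.cos (β/2)^2 - 1 := by
    rw [show β = 2 * (β/2) by ring, Real.cos_two_mul]; ring_nf
  rw [sA, cA] at h2
  rw [sB, cB] at h3
  rw [sA, cA, sB, cB]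
  rw [Real.sin_sub, Real.sin_sub] at h1
  have pa : Real.sin (α/2)^2 + Real.cos (α/2)^2 = 1 := Real.sin_sq_add_cos_sq _
  have pb : Real.sin (β/2)^2 + Real.cos (β/2)^2 = 1 := Real.sin_sq_add_cos_sq _
  have key : Real.sin (α/2) * Real.sin (β/2) *
      ((2 * Real.sin (β/2) * Real.cos (β/2) * Real.sin γ -
        2 * Real.sin (α/2) * Real.cos (α/2) * Real.sin δ) * Real.cos a) =
      Real.sin (α/2) * Real.sin (β/2) *
      ((2 * Real.cos (β/2)^2 - 1) * Real.cos γ - (2 * Real.cos (α/2)^2 - 1) * Real.cos δ) := by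
    linear_combination (Real.sin (α/2) * Real.cos (β/2)) * h3 -
      (Real.sin (β/2) * Real.cos (α/2)) * h2 + h1 -
      (2 * Real.cos (α/2) * Real.sin (β/2) * Real.sin δ * Real.cos a) * pa +
      (2 * Real.sin (α/2) * Real.cos (β/2) * Real.sin γ * Real.cos a) * pb
  have := mul_left_cancel₀ (mul_ne_zero hα hβ) key
  linarith [this]
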